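/- Let V be a real vector space with V = E₁ ⊕ E₂, φ ∈ End(V) nonderogatory with φ(E₁) ⊆ E₁ and φ(E₂) ⊆ E₂, and let φ_j be the restriction of φ to E_j. Then the Lie algebra ℝ[φ] ⋉ V is isomorphic to the direct sum of the Lie algebras ℝ[φ₁] ⋉ E₁ and ℝ[φ₂] ⋉ E₂. -/

import Mathlib

set_option synthInstance.maxHeartbeats 1000000
set_option maxHeartbeats 1000000

open Polynomial

section Aux

variable {V : Type*} [AddCommGroup V] [Module ℝ V] {E : Submodule ℝ V}
  (φ : Module.End ℝ V) (h : ∀ x ∈ E, φ x ∈ E)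
include h

private lemma aux_aeval_coe (p : ℝ[X]) (x : E) :
    (Polynomial.aeval φ p) (x : V) = ((Polynomial.aeval (φ.restrict h) p) x : V) := by
  induction p using Polynomial.induction_on' with
  | add p q hp hq => simp [hp, hq]
  | monomial n a =>
    simp only [aeval_monomial, Module.End.mul_apply, Module.algebraMap_end_apply,
      SetLike.val_smul]
    rw [Module.End.pow_restrict, LinearMap.restrict_coe_apply]

private lemma aux_aeval_mem (p : ℝ[X]) : ∀ x ∈ E, (Polynomial.aeval φ p) x ∈ E := by
  intro x hx
  rw [show x = ((⟨x, hx⟩ : E) : V) from rfl, aux_aeval_coe φ h p]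
  exact ((Polynomial.aeval (φ.restrict h) p) ⟨x, hx⟩).2

private lemma aux_restrict_aeval (p : ℝ[X]) :
    (Polynomial.aeval φ p).restrict (aux_aeval_mem φ h p) =
      Polynomial.aeval (φ.restrict h) p :=
  LinearMap.ext fun x => Subtype.ext (by
    rw [LinearMap.restrict_coe_apply]; exact aux_aeval_coe φ h p x)

end Aux

set_option maxHeartbeats 8000000 in
theorem stmt11_aux {V : Type*} [AddCommGroup V] [Module ℝ V] [FiniteDimensional ℝ V]
    (E₁ E₂ : Submodule ℝ V) (hcompl : IsCompl E₁ E₂)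
    (φ : Module.End ℝ V) (hnd : LinearMap.charpoly φ = minpoly ℝ φ)
    (h₁ : ∀ x ∈ E₁, φ x ∈ E₁) (h₂ : ∀ x ∈ E₂, φ x ∈ E₂) :
    ∃ e : ((Algebra.adjoin ℝ {φ} : Subalgebra ℝ (Module.End ℝ V)) × V) ≃ₗ[ℝ]
        (((Algebra.adjoin ℝ {φ.restrict h₁} : Subalgebra ℝ (Module.End ℝ E₁)) × E₁) ×
          ((Algebra.adjoin ℝ {φ.restrict h₂} : Subalgebra ℝ (Module.End ℝ E₂)) × E₂)),
      ∀ u v : (Algebra.adjoin ℝ {φ} : Subalgebra ℝ (Module.End ℝ V)) × V,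
        e (0, (u.1 : Module.End ℝ V) v.2 - (v.1 : Module.End ℝ V) u.2) =
          ((0, ((e u).1.1 : Module.End ℝ E₁) (e v).1.2 -
              ((e v).1.1 : Module.End ℝ E₁) (e u).1.2),
           (0, ((e u).2.1 : Module.End ℝ E₂) (e v).2.2 -
              ((e v).2.1 : Module.End ℝ E₂) (e u).2.2)) := by
  classical
  set φ₁ := φ.restrict h₁ with hφ₁
  set φ₂ := φ.restrict h₂ with hφ₂
  -- elements of the adjoin are polynomials in φ
  have key_ex : ∀ a ∈ Algebra.adjoin ℝ {φ}, ∃ p : ℝ[X], (Polynomial.aeval φ) p = a := by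
    intro a ha
    rwa [Algebra.adjoin_singleton_eq_range_aeval, AlgHom.mem_range] at ha
  have key_ex₁ : ∀ a ∈ Algebra.adjoin ℝ {φ₁}, ∃ p : ℝ[X], (Polynomial.aeval φ₁) p = a := by
    intro a ha
    rwa [Algebra.adjoin_singleton_eq_range_aeval, AlgHom.mem_range] at ha
  have key_ex₂ : ∀ a ∈ Algebra.adjoin ℝ {φ₂}, ∃ p : ℝ[X], (Polynomial.aeval φ₂) p = a := by
    intro a ha
    rwa [Algebra.adjoin_singleton_eq_range_aeval, AlgHom.mem_range] at ha
  have hinv₁ : ∀ a : (Algebra.adjoin ℝ {φ} : Subalgebra ℝ (Module.End ℝ V)),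
      ∀ x ∈ E₁, (a : Module.End ℝ V) x ∈ E₁ := by
    intro a x hx
    obtain ⟨p, hp⟩ := key_ex a a.2
    rw [← hp]; exact aux_aeval_mem φ h₁ p x hx
  have hinv₂ : ∀ a : (Algebra.adjoin ℝ {φ} : Subalgebra ℝ (Module.End ℝ V)),
      ∀ x ∈ E₂, (a : Module.End ℝ V) x ∈ E₂ := by
    intro a x hx
    obtain ⟨p, hp⟩ := key_ex a a.2
    rw [← hp]; exact aux_aeval_mem φ h₂ p x hx
  have hmem₁ : ∀ a : (Algebra.adjoin ℝ {φ} : Subalgebra ℝ (Module.End ℝ V)),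
      (a : Module.End ℝ V).restrict (hinv₁ a) ∈ Algebra.adjoin ℝ {φ₁} := by
    intro a
    obtain ⟨p, hp⟩ := key_ex a a.2
    have : (a : Module.End ℝ V).restrict (hinv₁ a) = Polynomial.aeval φ₁ p :=
      LinearMap.ext fun x => Subtype.ext (by
        rw [LinearMap.restrict_coe_apply, ← hp]; exact aux_aeval_coe φ h₁ p x)
    rw [this, Algebra.adjoin_singleton_eq_range_aeval]
    exact ⟨p, rfl⟩
  have hmem₂ : ∀ a : (Algebra.adjoin ℝ {φ} : Subalgebra ℝ (Module.End ℝ V)),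
      (a : Module.End ℝ V).restrict (hinv₂ a) ∈ Algebra.adjoin ℝ {φ₂} := by
    intro a
    obtain ⟨p, hp⟩ := key_ex a a.2
    have : (a : Module.End ℝ V).restrict (hinv₂ a) = Polynomial.aeval φ₂ p :=
      LinearMap.ext fun x => Subtype.ext (by
        rw [LinearMap.restrict_coe_apply, ← hp]; exact aux_aeval_coe φ h₂ p x)
    rw [this, Algebra.adjoin_singleton_eq_range_aeval]
    exact ⟨p, rfl⟩
  -- the linear map on the polynomial parts
  let ψ : (Algebra.adjoin ℝ {φ} : Subalgebra ℝ (Module.End ℝ V)) →ₗ[ℝ]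
      (Algebra.adjoin ℝ {φ₁} : Subalgebra ℝ (Module.End ℝ E₁)) ×
        (Algebra.adjoin ℝ {φ₂} : Subalgebra ℝ (Module.End ℝ E₂)) :=
    { toFun := fun a => (⟨(a : Module.End ℝ V).restrict (hinv₁ a), hmem₁ a⟩,
        ⟨(a : Module.End ℝ V).restrict (hinv₂ a), hmem₂ a⟩)
      map_add' := by
        intro a b
        refine Prod.ext (Subtype.ext (LinearMap.ext fun x => Subtype.ext ?_))
          (Subtype.ext (LinearMap.ext fun x => Subtype.ext ?_)) <;>
          simp [LinearMap.restrict_coe_apply]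
      map_smul' := by
        intro c a
        refine Prod.ext (Subtype.ext (LinearMap.ext fun x => Subtype.ext ?_))
          (Subtype.ext (LinearMap.ext fun x => Subtype.ext ?_)) <;>
          simp [LinearMap.restrict_coe_apply] }
  -- coprimality of the two minimal polynomials
  have hint : IsIntegral ℝ φ := Algebra.IsIntegral.isIntegral φ
  have hint₁ : IsIntegral ℝ φ₁ := Algebra.IsIntegral.isIntegral φ₁
  have hint₂ : IsIntegral ℝ φ₂ := Algebra.IsIntegral.isIntegral φ₂
  set m := minpoly ℝ φ with hm
  set m₁ := minpoly ℝ φ₁ with hm₁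
  set m₂ := minpoly ℝ φ₂ with hm₂
  have hm₁0 : m₁ ≠ 0 := minpoly.ne_zero hint₁
  have hm₂0 : m₂ ≠ 0 := minpoly.ne_zero hint₂
  have hdeg_m : m.natDegree = Module.finrank ℝ V := by
    rw [← hnd]; exact LinearMap.charpoly_natDegree φ
  have hdeg₁ : m₁.natDegree ≤ Module.finrank ℝ E₁ := by
    rw [← LinearMap.charpoly_natDegree φ₁]
    exact Polynomial.natDegree_le_of_dvd (LinearMap.minpoly_dvd_charpoly φ₁)
      (LinearMap.charpoly_monic φ₁).ne_zero
  have hdeg₂ : m₂.natDegree ≤ Module.finrank ℝ E₂ := by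
    rw [← LinearMap.charpoly_natDegree φ₂]
    exact Polynomial.natDegree_le_of_dvd (LinearMap.minpoly_dvd_charpoly φ₂)
      (LinearMap.charpoly_monic φ₂).ne_zero
  have hrank : Module.finrank ℝ E₁ + Module.finrank ℝ E₂ = Module.finrank ℝ V :=
    Submodule.finrank_add_eq_of_isCompl hcompl
  -- m divides lcm m₁ m₂
  have haevalL : ∀ q : ℝ[X], m₁ ∣ q → m₂ ∣ q → Polynomial.aeval φ q = 0 := by
    intro q hd₁ hd₂
    apply LinearMap.ext
    intro x
    obtain ⟨y, hy, z, hz, rfl⟩ : ∃ y ∈ E₁, ∃ z ∈ E₂, y + z = x := by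
      have : x ∈ E₁ ⊔ E₂ := by rw [hcompl.sup_eq_top]; trivial
      obtain ⟨y, hy, z, hz, hyz⟩ := Submodule.mem_sup.1 this
      exact ⟨y, hy, z, hz, hyz⟩
    have hy' : (Polynomial.aeval φ q) y = 0 := by
      rw [show y = ((⟨y, hy⟩ : E₁) : V) from rfl, aux_aeval_coe φ h₁ q]
      obtain ⟨c, rfl⟩ := hd₁
      rw [map_mul, minpoly.aeval, zero_mul]
      rfl
    have hz' : (Polynomial.aeval φ q) z = 0 := by
      rw [show z = ((⟨z, hz⟩ : E₂) : V) from rfl, aux_aeval_coe φ h₂ q]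
      obtain ⟨c, rfl⟩ := hd₂
      rw [map_mul, minpoly.aeval, zero_mul]
      rfl
    simp [hy', hz']
  have hmdvd : m ∣ EuclideanDomain.lcm m₁ m₂ :=
    minpoly.dvd ℝ φ (haevalL _ (EuclideanDomain.dvd_lcm_left _ _)
      (EuclideanDomain.dvd_lcm_right _ _))
  have hglcm : EuclideanDomain.gcd m₁ m₂ * EuclideanDomain.lcm m₁ m₂ = m₁ * m₂ :=
    EuclideanDomain.gcd_mul_lcm m₁ m₂
  have hl0 : EuclideanDomain.lcm m₁ m₂ ≠ 0 := by
    intro h0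
    rw [h0, mul_zero] at hglcm
    exact mul_ne_zero hm₁0 hm₂0 hglcm.symm
  have hg0 : EuclideanDomain.gcd m₁ m₂ ≠ 0 := by
    intro h0
    rw [h0, zero_mul] at hglcm
    exact mul_ne_zero hm₁0 hm₂0 hglcm.symm
  have hdegsum : (EuclideanDomain.gcd m₁ m₂).natDegree +
      (EuclideanDomain.lcm m₁ m₂).natDegree = m₁.natDegree + m₂.natDegree := by
    rw [← Polynomial.natDegree_mul hg0 hl0, hglcm, Polynomial.natDegree_mul hm₁0 hm₂0]
  have hdeg_le : m.natDegree ≤ (EuclideanDomain.lcm m₁ m₂).natDegree :=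
    Polynomial.natDegree_le_of_dvd hmdvd hl0
  have hgdeg : (EuclideanDomain.gcd m₁ m₂).natDegree = 0 := by
    have h1 : m₁.natDegree + m₂.natDegree ≤ m.natDegree := by
      rw [hdeg_m, ← hrank]; omega
    omega
  have hcop : IsCoprime m₁ m₂ := by
    rw [← EuclideanDomain.gcd_isUnit_iff]
    rw [Polynomial.eq_C_of_natDegree_eq_zero hgdeg]
    refine Polynomial.isUnit_C.2 (isUnit_iff_ne_zero.2 ?_)
    intro hc
    apply hg0
    rw [Polynomial.eq_C_of_natDegree_eq_zero hgdeg, hc, map_zero]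
  -- bijectivity of ψ
  have hψinj : Function.Injective ψ := by
    rw [injective_iff_map_eq_zero]
    intro a ha
    have ha1 : (a : Module.End ℝ V).restrict (hinv₁ a) = 0 :=
      congrArg Subtype.val (congrArg Prod.fst ha)
    have ha2 : (a : Module.End ℝ V).restrict (hinv₂ a) = 0 :=
      congrArg Subtype.val (congrArg Prod.snd ha)
    apply Subtype.ext
    apply LinearMap.ext
    intro x
    obtain ⟨y, hy, z, hz, rfl⟩ : ∃ y ∈ E₁, ∃ z ∈ E₂, y + z = x := by
      have : x ∈ E₁ ⊔ E₂ := by rw [hcompl.sup_eq_top]; trivial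
      obtain ⟨y, hy, z, hz, hyz⟩ := Submodule.mem_sup.1 this
      exact ⟨y, hy, z, hz, hyz⟩
    have hy' : (a : Module.End ℝ V) y = 0 := by
      have := congrArg Subtype.val (LinearMap.congr_fun ha1 ⟨y, hy⟩)
      rwa [LinearMap.restrict_coe_apply] at this
    have hz' : (a : Module.End ℝ V) z = 0 := by
      have := congrArg Subtype.val (LinearMap.congr_fun ha2 ⟨z, hz⟩)
      rwa [LinearMap.restrict_coe_apply] at this
    simp [hy', hz']
  have hψsurj : Function.Surjective ψ := by
    rintro ⟨b₁, b₂⟩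
    obtain ⟨p, hp⟩ := key_ex₁ b₁ b₁.2
    obtain ⟨q, hq⟩ := key_ex₂ b₂ b₂.2
    obtain ⟨c, d, hcd⟩ := hcop
    set r := p * (d * m₂) + q * (c * m₁) with hr
    have hmemr : Polynomial.aeval φ r ∈ Algebra.adjoin ℝ {φ} := by
      rw [Algebra.adjoin_singleton_eq_range_aeval]; exact ⟨r, rfl⟩
    refine ⟨⟨Polynomial.aeval φ r, hmemr⟩, ?_⟩
    have hres₁ : Polynomial.aeval φ₁ r = b₁ := by
      rw [← hp, hr]
      have e1 : Polynomial.aeval φ₁ m₁ = 0 := minpoly.aeval ℝ φ₁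
      have e2 : Polynomial.aeval φ₁ (d * m₂) = 1 := by
        have : d * m₂ = 1 - c * m₁ := by linear_combination hcd
        rw [this, map_sub, map_one, map_mul, e1, mul_zero, sub_zero]
      rw [map_add, map_mul, e2, mul_one, map_mul, map_mul, e1, mul_zero, mul_zero, add_zero]
    have hres₂ : Polynomial.aeval φ₂ r = b₂ := by
      rw [← hq, hr]
      have e1 : Polynomial.aeval φ₂ m₂ = 0 := minpoly.aeval ℝ φ₂
      have e2 : Polynomial.aeval φ₂ (c * m₁) = 1 := by
        have : c * m₁ = 1 - d * m₂ := by linear_combination hcd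
        rw [this, map_sub, map_one, map_mul, e1, mul_zero, sub_zero]
      rw [map_add, map_mul, map_mul, e1, mul_zero, mul_zero, zero_add, map_mul, e2, mul_one]
    refine Prod.ext (Subtype.ext ?_) (Subtype.ext ?_)
    · rw [← hres₁]
      exact aux_restrict_aeval φ h₁ r
    · rw [← hres₂]
      exact aux_restrict_aeval φ h₂ r
  let eA : (Algebra.adjoin ℝ {φ} : Subalgebra ℝ (Module.End ℝ V)) ≃ₗ[ℝ]
      ((Algebra.adjoin ℝ {φ₁} : Subalgebra ℝ (Module.End ℝ E₁)) ×
        (Algebra.adjoin ℝ {φ₂} : Subalgebra ℝ (Module.End ℝ E₂))) :=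
    LinearEquiv.ofBijective ψ ⟨hψinj, hψsurj⟩
  let eV : V ≃ₗ[ℝ] E₁ × E₂ := (Submodule.prodEquivOfIsCompl E₁ E₂ hcompl).symm
  let e : ((Algebra.adjoin ℝ {φ} : Subalgebra ℝ (Module.End ℝ V)) × V) ≃ₗ[ℝ]
      (((Algebra.adjoin ℝ {φ₁} : Subalgebra ℝ (Module.End ℝ E₁)) × E₁) ×
        ((Algebra.adjoin ℝ {φ₂} : Subalgebra ℝ (Module.End ℝ E₂)) × E₂)) :=
    (eA.prodCongr eV).trans
      (LinearEquiv.prodProdProdComm ℝ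
        (Algebra.adjoin ℝ {φ₁} : Subalgebra ℝ (Module.End ℝ E₁))
        (Algebra.adjoin ℝ {φ₂} : Subalgebra ℝ (Module.End ℝ E₂)) E₁ E₂)
  have happ : ∀ (a : (Algebra.adjoin ℝ {φ} : Subalgebra ℝ (Module.End ℝ V))) (x : V),
      e (a, x) = (((ψ a).1, (eV x).1), ((ψ a).2, (eV x).2)) := by
    intro a x
    simp only [e, eA, LinearEquiv.trans_apply, LinearEquiv.prodCongr_apply,
      LinearEquiv.prodProdProdComm_apply, LinearEquiv.ofBijective_apply]
    rfl
  -- the projection identity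
  have hdecomp : ∀ x : V, ((eV x).1 : V) + ((eV x).2 : V) = x := by
    intro x
    have := Submodule.coe_prodEquivOfIsCompl' E₁ E₂ hcompl (eV x)
    rw [LinearEquiv.apply_symm_apply] at this
    exact this.symm
  have hψ1 : ∀ (a : (Algebra.adjoin ℝ {φ} : Subalgebra ℝ (Module.End ℝ V))) (z : E₁),
      (((ψ a).1 : Module.End ℝ E₁) z : V) = (a : Module.End ℝ V) (z : V) := fun a z => rfl
  have hψ2 : ∀ (a : (Algebra.adjoin ℝ {φ} : Subalgebra ℝ (Module.End ℝ V))) (z : E₂),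
      (((ψ a).2 : Module.End ℝ E₂) z : V) = (a : Module.End ℝ V) (z : V) := fun a z => rfl
  have hkey2 : ∀ (a b : (Algebra.adjoin ℝ {φ} : Subalgebra ℝ (Module.End ℝ V))) (x y : V),
      eV ((a : Module.End ℝ V) y - (b : Module.End ℝ V) x) =
        (⟨(a : Module.End ℝ V) ((eV y).1 : V) - (b : Module.End ℝ V) ((eV x).1 : V),
            sub_mem (hinv₁ a _ (eV y).1.2) (hinv₁ b _ (eV x).1.2)⟩,
         ⟨(a : Module.End ℝ V) ((eV y).2 : V) - (b : Module.End ℝ V) ((eV x).2 : V),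
            sub_mem (hinv₂ a _ (eV y).2.2) (hinv₂ b _ (eV x).2.2)⟩) := by
    intro a b x y
    rw [LinearEquiv.symm_apply_eq, Submodule.coe_prodEquivOfIsCompl']
    show (a : Module.End ℝ V) y - (b : Module.End ℝ V) x =
      ((a : Module.End ℝ V) ((eV y).1 : V) - (b : Module.End ℝ V) ((eV x).1 : V)) +
        ((a : Module.End ℝ V) ((eV y).2 : V) - (b : Module.End ℝ V) ((eV x).2 : V))
    rw [sub_add_sub_comm, ← map_add, ← map_add, hdecomp, hdecomp]
  refine ⟨e, ?_⟩
  rintro ⟨a, x⟩ ⟨b, y⟩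
  rw [happ, happ, happ]
  simp only [map_zero]
  refine Prod.ext (Prod.ext rfl ?_) (Prod.ext rfl ?_)
  · show (eV ((a : Module.End ℝ V) y - (b : Module.End ℝ V) x)).1 = _
    rw [hkey2 a b x y]
    apply Subtype.ext
    simp only [AddSubgroupClass.coe_sub, hψ1]
  · show (eV ((a : Module.End ℝ V) y - (b : Module.End ℝ V) x)).2 = _
    rw [hkey2 a b x y]
    apply Subtype.ext
    simp only [AddSubgroupClass.coe_sub, hψ2]

theorem stmt11 {V : Type*} [AddCommGroup V] [Module ℝ V] [FiniteDimensional ℝ V]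
    (E₁ E₂ : Submodule ℝ V) (hcompl : IsCompl E₁ E₂)
    (φ : Module.End ℝ V) (hnd : LinearMap.charpoly φ = minpoly ℝ φ)
    (h₁ : ∀ x ∈ E₁, φ x ∈ E₁) (h₂ : ∀ x ∈ E₂, φ x ∈ E₂) :
    ∃ e : ((Algebra.adjoin ℝ {φ} : Subalgebra ℝ (Module.End ℝ V)) × V) ≃ₗ[ℝ]
        (((Algebra.adjoin ℝ {φ.restrict h₁} : Subalgebra ℝ (Module.End ℝ E₁)) × E₁) ×
          ((Algebra.adjoin ℝ {φ.restrict h₂} : Subalgebra ℝ (Module.End ℝ E₂)) × E₂)),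
      ∀ u v : (Algebra.adjoin ℝ {φ} : Subalgebra ℝ (Module.End ℝ V)) × V,
        e (0, (u.1 : Module.End ℝ V) v.2 - (v.1 : Module.End ℝ V) u.2) =
          ((0, ((e u).1.1 : Module.End ℝ E₁) (e v).1.2 -
              ((e v).1.1 : Module.End ℝ E₁) (e u).1.2),
           (0, ((e u).2.1 : Module.End ℝ E₂) (e v).2.2 -
              ((e v).2.1 : Module.End ℝ E₂) (e u).2.2)) :=
  stmt11_aux E₁ E₂ hcompl φ hnd h₁ h₂
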